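/- With F(a, b) the two-cache freshness in mean-deviation coordinates (fixed λ, ū, c̄ > 0), the second partial derivative of F with respect to a at the interior critical point a* is strictly negative; hence a* is a local maximum of a ↦ F(a, b). -/

import Mathlib

set_option maxHeartbeats 1000000

/-- Two-cache freshness in mean-deviation coordinates:
`u₁ = ū−b, u₂ = ū+b, c₁ = c̄−a, c₂ = c̄+a`. -/
noncomputable def twoCacheFreshness (lam ub cb b a : ℝ) : ℝ :=
  4 * cb * ub / ((lam + 2 * cb) * (lam + 2 * ub)) -
    lam / ((lam + 2 * cb) * (lam + 2 * ub)) *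
      ((ub - b) * (cb + a) / (cb + lam + ub + b - a) +
        (ub + b) * (cb - a) / (cb + lam + ub + a - b))

/-- The closed-form optimal cache-rate deviation `a*`. -/
noncomputable def aStar (lam ub cb b : ℝ) : ℝ :=
  b + (cb + lam + ub) / (b * (2 * cb + lam)) *
    (ub * (2 * cb + lam + ub) - b ^ 2 -
      Real.sqrt ((ub ^ 2 - b ^ 2) * ((2 * cb + lam + ub) ^ 2 - b ^ 2)))

/-- First derivative of `a ↦ twoCacheFreshness lam ub cb b a`. -/
noncomputable def F1 (lam ub cb b a : ℝ) : ℝ :=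
  -(lam / ((lam + 2 * cb) * (lam + 2 * ub))) *
    ((ub - b) * (2 * cb + lam + ub + b) / (cb + lam + ub + b - a) ^ 2 -
      (ub + b) * (2 * cb + lam + ub - b) / (cb + lam + ub + a - b) ^ 2)

/-- Second derivative of `a ↦ twoCacheFreshness lam ub cb b a`. -/
noncomputable def F2 (lam ub cb b a : ℝ) : ℝ :=
  -(lam / ((lam + 2 * cb) * (lam + 2 * ub))) *
    (2 * ((ub - b) * (2 * cb + lam + ub + b)) / (cb + lam + ub + b - a) ^ 3 +
      2 * ((ub + b) * (2 * cb + lam + ub - b)) / (cb + lam + ub + a - b) ^ 3)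

lemma hasDerivAt_twoCacheFreshness (lam ub cb b a : ℝ)
    (h1 : cb + lam + ub + b - a ≠ 0) (h2 : cb + lam + ub + a - b ≠ 0) :
    HasDerivAt (fun a => twoCacheFreshness lam ub cb b a) (F1 lam ub cb b a) a := by
  have hn1 : HasDerivAt (fun a : ℝ => (ub - b) * (cb + a)) (ub - b) a := by
    simpa using ((hasDerivAt_id a).const_add cb).const_mul (ub - b)
  have hd1 : HasDerivAt (fun a : ℝ => cb + lam + ub + b - a) (-1) a := by
    simpa using (hasDerivAt_id a).const_sub (cb + lam + ub + b)
  have hn2 : HasDerivAt (fun a : ℝ => (ub + b) * (cb - a)) (-(ub + b)) a := by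
    simpa using ((hasDerivAt_id a).const_sub cb).const_mul (ub + b)
  have hd2 : HasDerivAt (fun a : ℝ => cb + lam + ub + a - b) 1 a := by
    have : HasDerivAt (fun a : ℝ => cb + lam + ub + a) 1 a := by
      simpa using (hasDerivAt_id a).const_add (cb + lam + ub)
    simpa using this.sub_const b
  have ht1 := hn1.div hd1 h1
  have ht2 := hn2.div hd2 h2
  have := ((ht1.add ht2).const_mul (lam / ((lam + 2 * cb) * (lam + 2 * ub)))).const_sub
    (4 * cb * ub / ((lam + 2 * cb) * (lam + 2 * ub)))
  refine this.congr_deriv ?_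
  unfold F1; field_simp; ring

lemma quot_helper (K N1 N2 d1 d2 : ℝ) (h1 : d1 ≠ 0) (h2 : d2 ≠ 0) :
    -K * (-(N1 * (2 * d1 * -1)) / (d1 ^ 2) ^ 2 - -(N2 * (2 * d2 * 1)) / (d2 ^ 2) ^ 2) =
      -K * (2 * N1 / d1 ^ 3 + 2 * N2 / d2 ^ 3) := by
  field_simp; ring

lemma hasDerivAt_F1 (lam ub cb b a : ℝ)
    (h1 : cb + lam + ub + b - a ≠ 0) (h2 : cb + lam + ub + a - b ≠ 0) :
    HasDerivAt (fun a => F1 lam ub cb b a) (F2 lam ub cb b a) a := by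
  have hd1 : HasDerivAt (fun a : ℝ => cb + lam + ub + b - a) (-1) a := by
    simpa using (hasDerivAt_id a).const_sub (cb + lam + ub + b)
  have hd2 : HasDerivAt (fun a : ℝ => cb + lam + ub + a - b) 1 a := by
    have : HasDerivAt (fun a : ℝ => cb + lam + ub + a) 1 a := by
      simpa using (hasDerivAt_id a).const_add (cb + lam + ub)
    simpa using this.sub_const b
  have hp1 : HasDerivAt (fun a : ℝ => (cb + lam + ub + b - a) ^ 2)
      (2 * (cb + lam + ub + b - a) ^ 1 * (-1)) a := hd1.pow 2
  have hp2 : HasDerivAt (fun a : ℝ => (cb + lam + ub + a - b) ^ 2)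
      (2 * (cb + lam + ub + a - b) ^ 1 * 1) a := hd2.pow 2
  have ht1 := (hasDerivAt_const a ((ub - b) * (2 * cb + lam + ub + b))).div hp1 (pow_ne_zero 2 h1)
  have ht2 := (hasDerivAt_const a ((ub + b) * (2 * cb + lam + ub - b))).div hp2 (pow_ne_zero 2 h2)
  have := (ht1.sub ht2).const_mul (-(lam / ((lam + 2 * cb) * (lam + 2 * ub))))
  refine this.congr_deriv ?_
  unfold F2
  simp only [pow_one, zero_mul, zero_sub]
  rw [quot_helper _ _ _ _ _ h1 h2]

theorem second_derivative_negative_at_aStar (lam ub cb b : ℝ)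
    (hlam : 0 < lam) (hub : 0 < ub) (hcb : 0 < cb) (hb : 0 < b) (hbu : b < ub) :
    deriv (deriv (fun a => twoCacheFreshness lam ub cb b a)) (aStar lam ub cb b) < 0 ∧
      IsLocalMax (fun a => twoCacheFreshness lam ub cb b a) (aStar lam ub cb b) := by
  set A : ℝ := aStar lam ub cb b with hAdef
  set S : ℝ := cb + lam + ub with hS
  set P : ℝ := (ub - b) * (2 * cb + lam + ub + b) with hPdef
  set Q : ℝ := (ub + b) * (2 * cb + lam + ub - b) with hQdef
  have hP : 0 < P := mul_pos (by linarith) (by linarith)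
  have hQ : 0 < Q := mul_pos (by linarith) (by linarith)
  have hPQ : P < Q := by nlinarith [mul_pos hb (by linarith : (0:ℝ) < 2 * cb + lam)]
  set s : ℝ := Real.sqrt P with hsdef
  set t : ℝ := Real.sqrt Q with htdef
  have hs : 0 < s := Real.sqrt_pos.mpr hP
  have ht : 0 < t := Real.sqrt_pos.mpr hQ
  have hst : s < t := Real.sqrt_lt_sqrt hP.le hPQ
  have hs2 : s ^ 2 = P := Real.sq_sqrt hP.le
  have ht2 : t ^ 2 = Q := Real.sq_sqrt hQ.le
  have hSpos : 0 < S := by rw [hS]; linarith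
  have hA : A = b + S * (t - s) / (s + t) := by
    rw [hAdef]
    unfold aStar
    rw [show (ub ^ 2 - b ^ 2) * ((2 * cb + lam + ub) ^ 2 - b ^ 2) = P * Q by
      rw [hPdef, hQdef]; ring, Real.sqrt_mul hP.le, ← hsdef, ← htdef]
    have e1 : ub * (2 * cb + lam + ub) - b ^ 2 = (s ^ 2 + t ^ 2) / 2 := by
      rw [hs2, ht2, hPdef, hQdef]; ring
    have e2 : b * (2 * cb + lam) = (t ^ 2 - s ^ 2) / 2 := by
      rw [hs2, ht2, hPdef, hQdef]; ring
    rw [e1, e2, ← hS]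
    have hts : t - s ≠ 0 := by linarith
    have hst' : s + t ≠ 0 := by positivity
    have h3 : t ^ 2 - s ^ 2 ≠ 0 := by nlinarith
    field_simp
    ring
  have hx : S + b - A = 2 * S * s / (s + t) := by rw [hA]; field_simp; ring
  have hy : S + A - b = 2 * S * t / (s + t) := by rw [hA]; field_simp; ring
  have hxpos : 0 < S + b - A := by rw [hx]; positivity
  have hypos : 0 < S + A - b := by rw [hy]; positivity
  -- the critical point identity
  have hcritP : P * (S + A - b) ^ 2 = Q * (S + b - A) ^ 2 := by
    rw [hx, hy, ← hs2, ← ht2]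
    field_simp
  have hKpos : 0 < lam / ((lam + 2 * cb) * (lam + 2 * ub)) := by positivity
  -- derivative facts on the open interval
  have hne : ∀ x : ℝ, x ∈ Set.Ioo (b - S) (S + b) →
      (cb + lam + ub + b - x ≠ 0 ∧ cb + lam + ub + x - b ≠ 0) := by
    intro x hx'
    obtain ⟨h1', h2'⟩ := hx'
    constructor
    · intro h; linarith [hS]
    · intro h; linarith [hS]
  have hAmem : A ∈ Set.Ioo (b - S) (S + b) := ⟨by linarith, by linarith⟩
  have hUnhds : Set.Ioo (b - S) (S + b) ∈ nhds A := isOpen_Ioo.mem_nhds hAmem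
  have hEq : deriv (fun a => twoCacheFreshness lam ub cb b a) =ᶠ[nhds A]
      fun a => F1 lam ub cb b a := by
    filter_upwards [hUnhds] with x hx'
    exact (hasDerivAt_twoCacheFreshness lam ub cb b x (hne x hx').1 (hne x hx').2).deriv
  -- the sign of F1 on the interval
  have hF1sign : ∀ x : ℝ, x ∈ Set.Ioo (b - S) (S + b) →
      F1 lam ub cb b x =
        -(lam / ((lam + 2 * cb) * (lam + 2 * ub))) *
          (P / (S + b - x) ^ 2 - Q / (S + x - b) ^ 2) := by
    intro x _
    unfold F1
    rw [← hPdef, ← hQdef, hS]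
  have hANe := hne A hAmem
  constructor
  · -- second derivative is negative
    have h2 : deriv (deriv (fun a => twoCacheFreshness lam ub cb b a)) A
        = F2 lam ub cb b A := by
      rw [hEq.deriv_eq]
      exact (hasDerivAt_F1 lam ub cb b A hANe.1 hANe.2).deriv
    rw [h2]
    unfold F2
    rw [← hPdef, ← hQdef]
    have e1 : cb + lam + ub + b - A = S + b - A := by rw [hS]
    have e2 : cb + lam + ub + A - b = S + A - b := by rw [hS]
    rw [e1, e2]
    have hpos : 0 < 2 * P / (S + b - A) ^ 3 + 2 * Q / (S + A - b) ^ 3 := by positivity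
    nlinarith [mul_pos hKpos hpos]
  · -- local maximum
    have hdiff : ∀ x : ℝ, x ∈ Set.Ioo (b - S) (S + b) →
        DifferentiableAt ℝ (fun a => twoCacheFreshness lam ub cb b a) x := by
      intro x hx'
      exact (hasDerivAt_twoCacheFreshness lam ub cb b x (hne x hx').1 (hne x hx').2).differentiableAt
    apply isLocalMax_of_deriv_Ioo (a := b - S) (c := S + b) hAmem.1 hAmem.2
    · exact (hasDerivAt_twoCacheFreshness lam ub cb b A hANe.1 hANe.2).continuousAt
    · intro x hx'
      exact (hdiff x ⟨hx'.1, lt_trans hx'.2 hAmem.2⟩).differentiableWithinAt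
    · intro x hx'
      exact (hdiff x ⟨lt_trans hAmem.1 hx'.1, hx'.2⟩).differentiableWithinAt
    · intro x hx'
      have hxU : x ∈ Set.Ioo (b - S) (S + b) := ⟨hx'.1, lt_trans hx'.2 hAmem.2⟩
      rw [(hasDerivAt_twoCacheFreshness lam ub cb b x (hne x hxU).1 (hne x hxU).2).deriv,
        hF1sign x hxU]
      have hd1 : 0 < S + b - x := by linarith [hxU.2]
      have hd2 : 0 < S + x - b := by linarith [hxU.1]
      have hle : P / (S + b - x) ^ 2 ≤ Q / (S + x - b) ^ 2 := by
        rw [div_le_div_iff₀ (by positivity) (by positivity)]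
        have hbr : 0 < Q * (2 * S + 2 * b - x - A) + P * (2 * S + x + A - 2 * b) := by
          have b1 : 0 < 2 * S + 2 * b - x - A := by linarith [hxU.2, hAmem.2]
          have b2 : 0 < 2 * S + x + A - 2 * b := by linarith [hxU.1, hAmem.1]
          positivity
        nlinarith [hcritP, mul_pos (show (0:ℝ) < A - x by linarith [hx'.2]) hbr]
      nlinarith [mul_nonneg hKpos.le (sub_nonneg.mpr hle)]
    · intro x hx'
      have hxU : x ∈ Set.Ioo (b - S) (S + b) := ⟨lt_trans hAmem.1 hx'.1, hx'.2⟩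
      rw [(hasDerivAt_twoCacheFreshness lam ub cb b x (hne x hxU).1 (hne x hxU).2).deriv,
        hF1sign x hxU]
      have hd1 : 0 < S + b - x := by linarith [hxU.2]
      have hd2 : 0 < S + x - b := by linarith [hxU.1]
      have hle : Q / (S + x - b) ^ 2 ≤ P / (S + b - x) ^ 2 := by
        rw [div_le_div_iff₀ (by positivity) (by positivity)]
        have hbr : 0 < Q * (2 * S + 2 * b - x - A) + P * (2 * S + x + A - 2 * b) := by
          have b1 : 0 < 2 * S + 2 * b - x - A := by linarith [hxU.2, hAmem.2]
          have b2 : 0 < 2 * S + x + A - 2 * b := by linarith [hxU.1, hAmem.1]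
          positivity
        nlinarith [hcritP, mul_pos (show (0:ℝ) < x - A by linarith [hx'.1]) hbr]
      nlinarith [mul_nonneg hKpos.le (sub_nonneg.mpr hle)]
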